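/- arXiv:2105.12282 — 3 statements merged into one kernel-verified Lean document; each statement's English description precedes it below -/
import Mathlib

section
/- (Functoriality of ev_ℝ on composition of spans) Let P, W, Q, W', R be finite types with functions f : W → P, g : W → Q, f' : W' → Q, g' : W' → R. Let Z = {(w, w') : W × W' // g w = f' w'} be the pullback with projections π : Z → W and π' : Z → W', so that the composite span is P ← Z → R with legs f ∘ π and g' ∘ π'. Then g'_* ∘ f'^* ∘ g_* ∘ f^* = (g' ∘ π')_* ∘ (f ∘ π)^* as maps (P → ℝ) → (R → ℝ). -/
/-- Pushforward along `f : α → β`: sum over fibers. -/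
noncomputable def pushforward {α β : Type*} [Fintype α] [DecidableEq β]
    (f : α → β) (y : α → ℝ) : β → ℝ :=
  fun b => ∑ a : α, if f a = b then y a else 0

/-- Pullback along `f : α → β`: precomposition. -/
def pullback {α β : Type*} (f : α → β) (x : β → ℝ) : α → ℝ := x ∘ f

theorem ev_real_comp_spans {P W Q W' R : Type*}
    [Fintype P] [Fintype W] [Fintype Q] [Fintype W'] [Fintype R]
    [DecidableEq Q] [DecidableEq R]
    (f : W → P) (g : W → Q) (f' : W' → Q) (g' : W' → R) :
    pushforward g' ∘ pullback f' ∘ pushforward g ∘ pullback f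
      = pushforward (fun z : {p : W × W' // g p.1 = f' p.2} => g' z.val.2)
          ∘ pullback (fun z : {p : W × W' // g p.1 = f' p.2} => f z.val.1) := by
  funext x r
  simp only [Function.comp_apply, pushforward, pullback, Function.comp]
  rw [← Finset.sum_subtype (Finset.univ.filter fun p : W × W' => g p.1 = f' p.2)
      (by simp) (fun p => if g' p.2 = r then x (f p.1) else 0)]
  rw [Finset.sum_filter, Fintype.sum_prod_type, Finset.sum_comm]
  congr 1
  funext w'
  by_cases h : g' w' = r <;> simp [h]
end

section
/- (Functoriality of the discrete undirected composition) For finite types S, T, U, functions q : S → T and q' : T → U, and any map u : (S → ℝ) → (S → ℝ), define Φ_q(u) : (T → ℝ) → (T → ℝ) by Φ_q(u)(x) = x + q_*(u(q^* x) - q^* x). Then Φ_{q'}(Φ_q(u)) = Φ_{q' ∘ q}(u). -/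
/-- Transport of a discrete update map along `q`. -/
noncomputable def Phi {S T : Type*} [Fintype S] [DecidableEq T]
    (q : S → T) (u : (S → ℝ) → (S → ℝ)) : (T → ℝ) → (T → ℝ) :=
  fun x => x + pushforward q (u (pullback q x) - pullback q x)

lemma pushforward_comp {S T U : Type*} [Fintype S] [Fintype T]
    [DecidableEq T] [DecidableEq U] (q : S → T) (q' : T → U) (y : S → ℝ) :
    pushforward q' (pushforward q y) = pushforward (q' ∘ q) y := by
  funext c
  simp only [pushforward, Function.comp]
  have h : ∀ t : T, (if q' t = c then ∑ a : S, if q a = t then y a else 0 else 0)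
      = ∑ a : S, if q a = t then (if q' t = c then y a else 0) else 0 := by
    intro t; split <;> simp
  rw [Finset.sum_congr rfl (fun t _ => h t), Finset.sum_comm]
  refine Finset.sum_congr rfl fun s _ => ?_
  rw [Finset.sum_ite_eq Finset.univ (q s)]
  simp

theorem Phi_comp {S T U : Type*} [Fintype S] [Fintype T] [Fintype U]
    [DecidableEq T] [DecidableEq U] (q : S → T) (q' : T → U)
    (u : (S → ℝ) → (S → ℝ)) :
    Phi q' (Phi q u) = Phi (q' ∘ q) u := by
  funext x
  have hpull : pullback q (pullback q' x) = pullback (q' ∘ q) x := rfl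
  simp only [Phi, hpull, add_sub_cancel_left, ← pushforward_comp q q']
end

section
/- (Euler's method is natural for undirected systems) Let S, T be finite types, q : S → T a function, h : ℝ, and v : (S → ℝ) → (S → ℝ). Define Euler_h(v)(x) = x + h • v(x), Φ_q(u)(x) = x + q_*(u(q^* x) - q^* x), and Ψ_q(v) = q_* ∘ v ∘ q^*. Then Φ_q(Euler_h(v)) = Euler_h(Ψ_q(v)) as maps (T → ℝ) → (T → ℝ). -/
/-- One Euler step of size `h`. -/
def euler {S : Type*} (h : ℝ) (v : (S → ℝ) → (S → ℝ)) : (S → ℝ) → (S → ℝ) :=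
  fun x => x + h • v x

/-- Transport of a vector field along `q`. -/
noncomputable def Psi {S T : Type*} [Fintype S] [DecidableEq T]
    (q : S → T) (v : (S → ℝ) → (S → ℝ)) : (T → ℝ) → (T → ℝ) :=
  pushforward q ∘ v ∘ pullback q

theorem euler_natural_undirected {S T : Type*} [Fintype S] [DecidableEq T]
    (q : S → T) (h : ℝ) (v : (S → ℝ) → (S → ℝ)) :
    Phi q (euler h v) = euler h (Psi q v) := by
  funext x t
  simp only [Phi, Psi, euler, pushforward, pullback, Function.comp,
    Pi.add_apply, Pi.sub_apply, Pi.smul_apply, add_sub_cancel_left,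
    smul_eq_mul, Finset.mul_sum]
  congr 1
  apply Finset.sum_congr rfl
  intro a _
  split <;> simp
end
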